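/- Let S = {(φ₁,φ₂) ∈ ℝ² : 1+φ₂ > 0, 1-φ₁-φ₂ > 0, 1+φ₁-φ₂ > 0}. For fixed θ₁, θ₂ ∈ ℝ not both zero, define g(t) = (1 - θ₂²t²)/t - (1 + θ₂t)θ₁²t/(1 - θ₂t)³ for t > 0 such that (θ₁t/(1-θ₂t), θ₂t) ∈ S. Then g'(t) < 0 on this domain, i.e., g is strictly decreasing. -/

import Mathlib

/-- Monotonicity of `g(t) = 1/τ²(t)` along the AR(2) path: on the domain where the
AR(2) coefficients `(θ₁t/(1-θ₂t), θ₂t)` lie in the stationarity triangle `S`,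
the function `g` has a strictly negative derivative. -/
theorem stmt_3 (θ₁ θ₂ : ℝ) (hne : ¬(θ₁ = 0 ∧ θ₂ = 0)) (t : ℝ) (ht : 0 < t)
    (hden : 1 - θ₂ * t > 0)
    (hS : 1 + θ₂ * t > 0 ∧ 1 - θ₁ * t / (1 - θ₂ * t) - θ₂ * t > 0 ∧
      1 + θ₁ * t / (1 - θ₂ * t) - θ₂ * t > 0) :
    HasDerivAt
      (fun s : ℝ => (1 - θ₂ ^ 2 * s ^ 2) / s -
        (1 + θ₂ * s) * θ₁ ^ 2 * s / (1 - θ₂ * s) ^ 3)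
      (-((1 + θ₂ ^ 2 * t ^ 2) / t ^ 2) -
        (1 + 4 * θ₂ * t + θ₂ ^ 2 * t ^ 2) * θ₁ ^ 2 / (1 - θ₂ * t) ^ 4) t ∧
    (-((1 + θ₂ ^ 2 * t ^ 2) / t ^ 2) -
        (1 + 4 * θ₂ * t + θ₂ ^ 2 * t ^ 2) * θ₁ ^ 2 / (1 - θ₂ * t) ^ 4) < 0 := by
  obtain ⟨h1p, h2p, h3p⟩ := hS
  have ht0 : t ≠ 0 := ne_of_gt ht
  have hd0 : (1 - θ₂ * t) ≠ 0 := ne_of_gt hden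
  constructor
  · have hnum1 : HasDerivAt (fun s : ℝ => 1 - θ₂ ^ 2 * s ^ 2) (-(θ₂ ^ 2 * (2 * t))) t := by
      have h := ((hasDerivAt_pow 2 t).const_mul (θ₂ ^ 2)).const_sub 1
      exact h.congr_deriv (by norm_num)
    have hA : HasDerivAt (fun s : ℝ => (1 - θ₂ ^ 2 * s ^ 2) / s)
        ((-(θ₂ ^ 2 * (2 * t)) * t - (1 - θ₂ ^ 2 * t ^ 2) * 1) / t ^ 2) t :=
      hnum1.div (hasDerivAt_id t) ht0
    have ha : HasDerivAt (fun s : ℝ => 1 + θ₂ * s) θ₂ t := by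
      have h := ((hasDerivAt_id t).const_mul θ₂).const_add 1
      exact h.congr_deriv (by ring)
    have hnum2 : HasDerivAt (fun s : ℝ => (1 + θ₂ * s) * θ₁ ^ 2 * s)
        (θ₂ * θ₁ ^ 2 * t + (1 + θ₂ * t) * θ₁ ^ 2 * 1) t :=
      (ha.mul_const (θ₁ ^ 2)).mul (hasDerivAt_id t)
    have hc : HasDerivAt (fun s : ℝ => 1 - θ₂ * s) (-θ₂) t := by
      have h := ((hasDerivAt_id t).const_mul θ₂).const_sub 1
      exact h.congr_deriv (by ring)
    have hden3 : HasDerivAt (fun s : ℝ => (1 - θ₂ * s) ^ 3)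
        (3 * (1 - θ₂ * t) ^ 2 * (-θ₂)) t := by
      have h := hc.pow 3
      exact h.congr_deriv (by ring)
    have hB : HasDerivAt (fun s : ℝ => (1 + θ₂ * s) * θ₁ ^ 2 * s / (1 - θ₂ * s) ^ 3)
        (((θ₂ * θ₁ ^ 2 * t + (1 + θ₂ * t) * θ₁ ^ 2 * 1) * (1 - θ₂ * t) ^ 3 -
          (1 + θ₂ * t) * θ₁ ^ 2 * t * (3 * (1 - θ₂ * t) ^ 2 * (-θ₂))) /
            ((1 - θ₂ * t) ^ 3) ^ 2) t :=
      hnum2.div hden3 (pow_ne_zero 3 hd0)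
    have h := hA.sub hB
    exact h.congr_deriv (by field_simp; ring)
  · have ha : (1 - θ₂ * t) ^ 2 - θ₁ * t > 0 := by
      have hdm : θ₁ * t / (1 - θ₂ * t) * (1 - θ₂ * t) = θ₁ * t :=
        div_mul_cancel₀ _ hd0
      nlinarith [mul_pos h2p hden, hdm]
    have hb : (1 - θ₂ * t) ^ 2 + θ₁ * t > 0 := by
      have hdm : θ₁ * t / (1 - θ₂ * t) * (1 - θ₂ * t) = θ₁ * t :=
        div_mul_cancel₀ _ hd0
      nlinarith [mul_pos h3p hden, hdm]
    have hP : 0 < (1 + θ₂ ^ 2 * t ^ 2) * (1 - θ₂ * t) ^ 4 +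
        (1 + 4 * θ₂ * t + θ₂ ^ 2 * t ^ 2) * θ₁ ^ 2 * t ^ 2 := by
      nlinarith [mul_pos ha hb, sq_nonneg (θ₁ * t * (1 + θ₂ * t)), sq_nonneg (θ₂ * t),
        mul_pos (mul_pos ha hb) (by positivity : (0:ℝ) < 1 + θ₂ ^ 2 * t ^ 2)]
    have hq : (0:ℝ) < t ^ 2 * (1 - θ₂ * t) ^ 4 := by positivity
    have heq : -((1 + θ₂ ^ 2 * t ^ 2) / t ^ 2) -
        (1 + 4 * θ₂ * t + θ₂ ^ 2 * t ^ 2) * θ₁ ^ 2 / (1 - θ₂ * t) ^ 4 =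
        -(((1 + θ₂ ^ 2 * t ^ 2) * (1 - θ₂ * t) ^ 4 +
          (1 + 4 * θ₂ * t + θ₂ ^ 2 * t ^ 2) * θ₁ ^ 2 * t ^ 2) /
          (t ^ 2 * (1 - θ₂ * t) ^ 4)) := by
      field_simp
      ring
    rw [heq]
    linarith [div_pos hP hq]
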